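/- Let a < b be real numbers. Let f : ℝ → ℝ be continuous on [a,b] and differentiable on (a,b), and let M ≥ 0 satisfy |f'(t)| ≤ M for all t ∈ (a,b). Then |∫_a^b f(t) dt − f((a+b)/2)·(b − a)| ≤ M·(b − a)²/4. -/

import Mathlib

/-- Mid-point inequality (continuous case). -/
theorem midpoint_inequality (a b M : ℝ) (hab : a < b)
    (f f' : ℝ → ℝ)
    (hcont : ContinuousOn f (Set.Icc a b))
    (hderiv : ∀ t ∈ Set.Ioo a b, HasDerivAt f (f' t) t)
    (hM : 0 ≤ M) (hbound : ∀ t ∈ Set.Ioo a b, |f' t| ≤ M) :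
    |(∫ t in a..b, f t) - f ((a + b) / 2) * (b - a)| ≤ M * (b - a) ^ 2 / 4 := by
  set m : ℝ := (a + b) / 2 with hm
  have ham : a < m := by rw [hm]; linarith
  have hmb : m < b := by rw [hm]; linarith
  have hab' : a ≤ b := hab.le
  -- Lipschitz estimate at m
  have key : ∀ t ∈ Set.Icc a b, |f t - f m| ≤ M * |t - m| := by
    intro t ht
    rcases lt_trichotomy t m with h | h | h
    · obtain ⟨c, hc, hc'⟩ := exists_hasDerivAt_eq_slope f f' h
        (hcont.mono (Set.Icc_subset_Icc ht.1 hmb.le))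
        (fun x hx => hderiv x ⟨lt_of_le_of_lt ht.1 hx.1, lt_of_lt_of_le hx.2 hmb.le⟩)
      rw [eq_div_iff (by linarith : m - t ≠ 0)] at hc'
      have hfc : f m - f t = f' c * (m - t) := hc'.symm
      have : |f t - f m| = |f' c| * |m - t| := by
        rw [abs_sub_comm, hfc, abs_mul]
      rw [this, abs_sub_comm m t]
      exact mul_le_mul_of_nonneg_right
        (hbound c ⟨lt_of_le_of_lt ht.1 hc.1, lt_of_lt_of_le hc.2 hmb.le⟩) (abs_nonneg _)
    · simp [h]
    · obtain ⟨c, hc, hc'⟩ := exists_hasDerivAt_eq_slope f f' h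
        (hcont.mono (Set.Icc_subset_Icc ham.le ht.2))
        (fun x hx => hderiv x ⟨lt_trans ham hx.1, lt_of_lt_of_le hx.2 ht.2⟩)
      rw [eq_div_iff (by linarith : t - m ≠ 0)] at hc'
      have hfc : f t - f m = f' c * (t - m) := hc'.symm
      have : |f t - f m| = |f' c| * |t - m| := by rw [hfc, abs_mul]
      rw [this]
      exact mul_le_mul_of_nonneg_right
        (hbound c ⟨lt_trans ham hc.1, lt_of_lt_of_le hc.2 ht.2⟩) (abs_nonneg _)
  have huIcc : Set.uIcc a b = Set.Icc a b := Set.uIcc_of_le hab'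
  have hintf : IntervalIntegrable f MeasureTheory.volume a b :=
    (hcont.mono (by rw [huIcc])).intervalIntegrable
  have hg : ContinuousOn (fun t => |f t - f m|) (Set.Icc a b) :=
    (hcont.sub continuousOn_const).abs
  have hintg : IntervalIntegrable (fun t => |f t - f m|) MeasureTheory.volume a b :=
    (hg.mono (by rw [huIcc])).intervalIntegrable
  have hinth : IntervalIntegrable (fun t => M * |t - m|) MeasureTheory.volume a b :=
    Continuous.intervalIntegrable (by continuity) a b
  have step1 : (∫ t in a..b, f t) - f m * (b - a) = ∫ t in a..b, (f t - f m) := by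
    rw [intervalIntegral.integral_sub hintf intervalIntegrable_const,
      intervalIntegral.integral_const]
    ring_nf
  rw [step1]
  have step2 : |∫ t in a..b, (f t - f m)| ≤ ∫ t in a..b, |f t - f m| :=
    intervalIntegral.abs_integral_le_integral_abs hab'
  have step3 : (∫ t in a..b, |f t - f m|) ≤ ∫ t in a..b, M * |t - m| :=
    intervalIntegral.integral_mono_on hab' hintg hinth key
  have step4 : (∫ t in a..b, M * |t - m|) = M * (b - a) ^ 2 / 4 := by
    have hsplit : (∫ t in a..m, M * |t - m|) + (∫ t in m..b, M * |t - m|)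
        = ∫ t in a..b, M * |t - m| :=
      intervalIntegral.integral_add_adjacent_intervals
        (Continuous.intervalIntegrable (by continuity) a m)
        (Continuous.intervalIntegrable (by continuity) m b)
    have h1 : (∫ t in a..m, M * |t - m|) = ∫ t in a..m, M * (m - t) := by
      apply intervalIntegral.integral_congr
      intro x hx
      rw [Set.uIcc_of_le ham.le] at hx
      show M * |x - m| = M * (m - x)
      rw [abs_of_nonpos (by linarith [hx.2] : x - m ≤ 0)]
      ring
    have h2 : (∫ t in m..b, M * |t - m|) = ∫ t in m..b, M * (t - m) := by
      apply intervalIntegral.integral_congr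
      intro x hx
      rw [Set.uIcc_of_le hmb.le] at hx
      show M * |x - m| = M * (x - m)
      rw [abs_of_nonneg (by linarith [hx.1] : (0:ℝ) ≤ x - m)]
    rw [← hsplit, h1, h2]
    have e1 : (∫ t in a..m, M * (m - t)) = M * (m - a) ^ 2 / 2 := by
      rw [intervalIntegral.integral_const_mul,
        intervalIntegral.integral_comp_sub_left (fun x => x) m,
        integral_id]
      ring
    have e2 : (∫ t in m..b, M * (t - m)) = M * (b - m) ^ 2 / 2 := by
      rw [intervalIntegral.integral_const_mul,
        intervalIntegral.integral_comp_sub_right (fun x => x) m,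
        integral_id]
      ring
    rw [e1, e2, hm]
    ring
  calc |∫ t in a..b, (f t - f m)| ≤ ∫ t in a..b, |f t - f m| := step2
    _ ≤ ∫ t in a..b, M * |t - m| := step3
    _ = M * (b - a) ^ 2 / 4 := step4
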